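/- For any w ∈ V (zero-mean, z-even, L^2 vector field with div_2(w̄) = 0) and any v ∈ (H^2(O))^2, the nonlinear form b satisfies ⟨b(w,v), v⟩_{L^2} = 0, where b(u,v) = (u·∇_2)v − (∫_{-h}^z div_2 u(·,·,ξ) dξ) ∂_z v. -/

import Mathlib

open MeasureTheory intervalIntegral

/-- Horizontal divergence `div₂ w = ∂ₓ w₁ + ∂_y w₂`. -/
noncomputable def div2 (w : ℝ → ℝ → ℝ → ℝ × ℝ) (x y z : ℝ) : ℝ :=
  deriv (fun x' => (w x' y z).1) x + deriv (fun y' => (w x y' z).2) y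

/-- The primitive-equations nonlinearity
`b(u,v) = (u·∇₂)v − (∫_{-h}^z div₂ u dξ) ∂_z v`. -/
noncomputable def bPE (h : ℝ) (u v : ℝ → ℝ → ℝ → ℝ × ℝ) (x y z : ℝ) : ℝ × ℝ :=
  (u x y z).1 • deriv (fun x' => v x' y z) x
    + (u x y z).2 • deriv (fun y' => v x y' z) y
    - (∫ ξ in (-h)..z, div2 u x y ξ) • deriv (fun z' => v x y z') z

/-- Fubini for interval integrals of continuous functions. -/
lemma interval_integral_swap {g : ℝ → ℝ → ℝ}
    (hg : Continuous fun p : ℝ × ℝ => g p.1 p.2)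
    {a b c d : ℝ} (hab : a ≤ b) (hcd : c ≤ d) :
    (∫ x in a..b, ∫ y in c..d, g x y) = ∫ y in c..d, ∫ x in a..b, g x y := by
  rw [intervalIntegral.integral_of_le hab, intervalIntegral.integral_of_le hcd]
  simp_rw [intervalIntegral.integral_of_le hab, intervalIntegral.integral_of_le hcd]
  apply MeasureTheory.integral_integral_swap
  rw [Measure.prod_restrict]
  have hcomp : IsCompact (Set.Icc a b ×ˢ Set.Icc c d) := isCompact_Icc.prod isCompact_Icc
  have : IntegrableOn (fun p : ℝ × ℝ => g p.1 p.2) (Set.Icc a b ×ˢ Set.Icc c d)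
      (volume.prod volume) := by
    rw [← MeasureTheory.Measure.volume_eq_prod]
    exact hg.continuousOn.integrableOn_compact hcomp
  exact this.mono_set (Set.prod_mono Set.Ioc_subset_Icc_self Set.Ioc_subset_Icc_self)


section helpers
variable {E : Type*} [NormedAddCommGroup E] [NormedSpace ℝ E]

lemma line1_hasDerivAt (y z x : ℝ) :
    HasDerivAt (fun x' : ℝ => (x', y, z)) ((1:ℝ), (0:ℝ), (0:ℝ)) x :=
  (hasDerivAt_id x).prodMk ((hasDerivAt_const x y).prodMk (hasDerivAt_const x z))

lemma line2_hasDerivAt (x z y : ℝ) :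
    HasDerivAt (fun y' : ℝ => (x, y', z)) ((0:ℝ), (1:ℝ), (0:ℝ)) y :=
  (hasDerivAt_const y x).prodMk ((hasDerivAt_id y).prodMk (hasDerivAt_const y z))

lemma line3_hasDerivAt (x y z : ℝ) :
    HasDerivAt (fun z' : ℝ => (x, y, z')) ((0:ℝ), (0:ℝ), (1:ℝ)) z :=
  (hasDerivAt_const z x).prodMk ((hasDerivAt_const z y).prodMk (hasDerivAt_id z))

lemma pd1_hasDerivAt {F : ℝ × ℝ × ℝ → E} (hF : Differentiable ℝ F) (x y z : ℝ) :
    HasDerivAt (fun x' => F (x', y, z)) (fderiv ℝ F (x, y, z) (1, 0, 0)) x :=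
  (hF (x, y, z)).hasFDerivAt.comp_hasDerivAt x (line1_hasDerivAt y z x)

lemma pd2_hasDerivAt {F : ℝ × ℝ × ℝ → E} (hF : Differentiable ℝ F) (x y z : ℝ) :
    HasDerivAt (fun y' => F (x, y', z)) (fderiv ℝ F (x, y, z) (0, 1, 0)) y :=
  (hF (x, y, z)).hasFDerivAt.comp_hasDerivAt y (line2_hasDerivAt x z y)

lemma pd3_hasDerivAt {F : ℝ × ℝ × ℝ → E} (hF : Differentiable ℝ F) (x y z : ℝ) :
    HasDerivAt (fun z' => F (x, y, z')) (fderiv ℝ F (x, y, z) (0, 0, 1)) z :=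
  (hF (x, y, z)).hasFDerivAt.comp_hasDerivAt z (line3_hasDerivAt x y z)

lemma cont_pd {F : ℝ × ℝ × ℝ → E} {n : WithTop ℕ∞} (hF : ContDiff ℝ n F) (hn : 1 ≤ n)
    (c : ℝ × ℝ × ℝ) : Continuous fun p => fderiv ℝ F p c :=
  (hF.continuous_fderiv (lt_of_lt_of_le zero_lt_one hn).ne').clm_apply continuous_const

lemma HasDerivAt.fst' {g : ℝ → E × E} {g' : E × E} {x : ℝ} (hg : HasDerivAt g g' x) :
    HasDerivAt (fun t => (g t).1) g'.1 x :=
  (ContinuousLinearMap.fst ℝ E E).hasFDerivAt.comp_hasDerivAt x hg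

lemma HasDerivAt.snd' {g : ℝ → E × E} {g' : E × E} {x : ℝ} (hg : HasDerivAt g g' x) :
    HasDerivAt (fun t => (g t).2) g'.2 x :=
  (ContinuousLinearMap.snd ℝ E E).hasFDerivAt.comp_hasDerivAt x hg

end helpers

section param
variable {E : Type*} [NormedAddCommGroup E] [NormedSpace ℝ E] [CompleteSpace E]

/-- Differentiation under the interval integral sign, in the first variable. -/
lemma hasDerivAt_param1 {F : ℝ × ℝ × ℝ → E} (hF : ContDiff ℝ 1 F) (a b y x : ℝ) :
    HasDerivAt (fun x' => ∫ z in a..b, F (x', y, z))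
      (∫ z in a..b, fderiv ℝ F (x, y, z) (1, 0, 0)) x := by
  have hFc : Continuous F := hF.continuous
  have hF' : Continuous fun p : ℝ × ℝ × ℝ => fderiv ℝ F p (1, 0, 0) :=
    cont_pd hF le_rfl _
  obtain ⟨C, hC⟩ := (isCompact_Icc.prod (isCompact_Icc.prod isCompact_Icc)).exists_bound_of_continuousOn
    (s := Set.Icc (x - 1) (x + 1) ×ˢ Set.Icc y y ×ˢ Set.uIcc a b) hF'.continuousOn
  have key := intervalIntegral.hasDerivAt_integral_of_dominated_loc_of_deriv_le
    (F := fun x' t => F (x', y, t)) (F' := fun x' t => fderiv ℝ F (x', y, t) (1, 0, 0))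
    (μ := volume) (x₀ := x) (a := a) (b := b) (bound := fun _ => C) (s := Metric.ball x 1) (Metric.ball_mem_nhds x one_pos)
    (Filter.Eventually.of_forall fun x' =>
      (hFc.comp (by fun_prop : Continuous fun t : ℝ => ((x' : ℝ), y, t))).aestronglyMeasurable)
    ((hFc.comp (by fun_prop : Continuous fun t : ℝ => ((x : ℝ), y, t))).intervalIntegrable a b)
    ((hF'.comp (by fun_prop : Continuous fun t : ℝ => ((x : ℝ), y, t))).aestronglyMeasurable)
    (Filter.Eventually.of_forall fun t ht x' hx' => by
      apply hC
      refine Set.mk_mem_prod ?_ (Set.mk_mem_prod (by simp) ?_)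
      · have := Metric.mem_ball.mp hx'
        rw [Real.dist_eq] at this
        constructor <;> [linarith [neg_abs_le (x' - x)]; linarith [le_abs_self (x' - x)]]
      · exact Set.uIoc_subset_uIcc ht)
    intervalIntegrable_const
    (Filter.Eventually.of_forall fun t ht x' hx' =>
      pd1_hasDerivAt (hF.differentiable one_ne_zero) x' y t)
  exact key.2

/-- Differentiation under the interval integral sign, in the second variable. -/
lemma hasDerivAt_param2 {F : ℝ × ℝ × ℝ → E} (hF : ContDiff ℝ 1 F) (a b x y : ℝ) :
    HasDerivAt (fun y' => ∫ z in a..b, F (x, y', z))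
      (∫ z in a..b, fderiv ℝ F (x, y, z) (0, 1, 0)) y := by
  have hFc : Continuous F := hF.continuous
  have hF' : Continuous fun p : ℝ × ℝ × ℝ => fderiv ℝ F p (0, 1, 0) :=
    cont_pd hF le_rfl _
  obtain ⟨C, hC⟩ := (isCompact_Icc.prod (isCompact_Icc.prod isCompact_Icc)).exists_bound_of_continuousOn
    (s := Set.Icc x x ×ˢ Set.Icc (y - 1) (y + 1) ×ˢ Set.uIcc a b) hF'.continuousOn
  have key := intervalIntegral.hasDerivAt_integral_of_dominated_loc_of_deriv_le
    (F := fun y' t => F (x, y', t)) (F' := fun y' t => fderiv ℝ F (x, y', t) (0, 1, 0))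
    (μ := volume) (x₀ := y) (a := a) (b := b) (bound := fun _ => C) (s := Metric.ball y 1) (Metric.ball_mem_nhds y one_pos)
    (Filter.Eventually.of_forall fun y' =>
      (hFc.comp (by fun_prop : Continuous fun t : ℝ => ((x : ℝ), y', t))).aestronglyMeasurable)
    ((hFc.comp (by fun_prop : Continuous fun t : ℝ => ((x : ℝ), y, t))).intervalIntegrable a b)
    ((hF'.comp (by fun_prop : Continuous fun t : ℝ => ((x : ℝ), y, t))).aestronglyMeasurable)
    (Filter.Eventually.of_forall fun t ht y' hy' => by
      apply hC
      refine Set.mk_mem_prod (by simp) (Set.mk_mem_prod ?_ ?_)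
      · have := Metric.mem_ball.mp hy'
        rw [Real.dist_eq] at this
        constructor <;> [linarith [neg_abs_le (y' - y)]; linarith [le_abs_self (y' - y)]]
      · exact Set.uIoc_subset_uIcc ht)
    intervalIntegrable_const
    (Filter.Eventually.of_forall fun t ht y' hy' =>
      pd2_hasDerivAt (hF.differentiable one_ne_zero) x y' t)
  exact key.2

end param

namespace PEproof

/-- uncurried version of a field -/
def U3 (w : ℝ → ℝ → ℝ → ℝ × ℝ) : ℝ × ℝ × ℝ → ℝ × ℝ := fun ζ => w ζ.1 ζ.2.1 ζ.2.2

/-- half squared norm of `v` -/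
noncomputable def fv (v : ℝ → ℝ → ℝ → ℝ × ℝ) (p : ℝ × ℝ × ℝ) : ℝ :=
  ((U3 v p).1 ^ 2 + (U3 v p).2 ^ 2) / 2

/-- directional derivative of `fv` -/
noncomputable def dfv (v : ℝ → ℝ → ℝ → ℝ × ℝ) (c p : ℝ × ℝ × ℝ) : ℝ :=
  (fderiv ℝ (U3 v) p c).1 * (U3 v p).1 + (fderiv ℝ (U3 v) p c).2 * (U3 v p).2

noncomputable def g1 (w v : ℝ → ℝ → ℝ → ℝ × ℝ) (p : ℝ × ℝ × ℝ) : ℝ :=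
  (fderiv ℝ (U3 w) p (1, 0, 0)).1 * fv v p + (U3 w p).1 * dfv v (1, 0, 0) p

noncomputable def g2 (w v : ℝ → ℝ → ℝ → ℝ × ℝ) (p : ℝ × ℝ × ℝ) : ℝ :=
  (fderiv ℝ (U3 w) p (0, 1, 0)).2 * fv v p + (U3 w p).2 * dfv v (0, 1, 0) p

noncomputable def g3 (h : ℝ) (w v : ℝ → ℝ → ℝ → ℝ × ℝ) (p : ℝ × ℝ × ℝ) : ℝ :=
  div2 w p.1 p.2.1 p.2.2 * fv v p
    + (∫ ξ in (-h)..p.2.2, div2 w p.1 p.2.1 ξ) * dfv v (0, 0, 1) p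

variable {w v : ℝ → ℝ → ℝ → ℝ × ℝ} {h : ℝ}

lemma div2_eq (hw : ContDiff ℝ 1 (U3 w)) (x y z : ℝ) :
    div2 w x y z = (fderiv ℝ (U3 w) (x, y, z) (1, 0, 0)).1
      + (fderiv ℝ (U3 w) (x, y, z) (0, 1, 0)).2 := by
  have h1 := ((pd1_hasDerivAt (hw.differentiable one_ne_zero) x y z).fst').deriv
  have h2 := ((pd2_hasDerivAt (hw.differentiable one_ne_zero) x y z).snd').deriv
  unfold div2
  rw [← h1, ← h2]
  rfl

lemma cont_div2 (hw : ContDiff ℝ 1 (U3 w)) :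
    Continuous fun p : ℝ × ℝ × ℝ => div2 w p.1 p.2.1 p.2.2 := by
  have : (fun p : ℝ × ℝ × ℝ => div2 w p.1 p.2.1 p.2.2)
      = fun p => (fderiv ℝ (U3 w) p (1, 0, 0)).1 + (fderiv ℝ (U3 w) p (0, 1, 0)).2 := by
    funext p
    exact div2_eq hw p.1 p.2.1 p.2.2
  rw [this]
  exact ((cont_pd hw le_rfl _).fst).add ((cont_pd hw le_rfl _).snd)

lemma cont_fv (hv : ContDiff ℝ 1 (U3 v)) : Continuous (fv v) := by
  have := hv.continuous
  unfold fv
  fun_prop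

lemma cont_dfv (hv : ContDiff ℝ 1 (U3 v)) (c : ℝ × ℝ × ℝ) : Continuous (dfv v c) := by
  have h1 := hv.continuous
  have h2 := cont_pd hv le_rfl c
  unfold dfv
  fun_prop

lemma cont_g1 (hw : ContDiff ℝ 1 (U3 w)) (hv : ContDiff ℝ 1 (U3 v)) :
    Continuous (g1 w v) := by
  have h1 := hw.continuous
  have h2 := cont_pd hw le_rfl ((1:ℝ), (0:ℝ), (0:ℝ))
  have h3 := cont_fv hv
  have h4 := cont_dfv hv ((1:ℝ), (0:ℝ), (0:ℝ))
  unfold g1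
  fun_prop

lemma cont_g2 (hw : ContDiff ℝ 1 (U3 w)) (hv : ContDiff ℝ 1 (U3 v)) :
    Continuous (g2 w v) := by
  have h1 := hw.continuous
  have h2 := cont_pd hw le_rfl ((0:ℝ), (1:ℝ), (0:ℝ))
  have h3 := cont_fv hv
  have h4 := cont_dfv hv ((0:ℝ), (1:ℝ), (0:ℝ))
  unfold g2
  fun_prop

lemma cont_WZ (hw : ContDiff ℝ 1 (U3 w)) :
    Continuous fun p : ℝ × ℝ × ℝ => ∫ ξ in (-h)..p.2.2, div2 w p.1 p.2.1 ξ := by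
  have hc : Continuous (Function.uncurry fun (p : ℝ × ℝ × ℝ) (t : ℝ) => div2 w p.1 p.2.1 t) := by
    have := cont_div2 hw
    have hm : Continuous fun q : (ℝ × ℝ × ℝ) × ℝ => (q.1.1, q.1.2.1, q.2) := by fun_prop
    exact this.comp hm
  exact intervalIntegral.continuous_parametric_intervalIntegral_of_continuous hc (by fun_prop)

lemma cont_g3 (hw : ContDiff ℝ 1 (U3 w)) (hv : ContDiff ℝ 1 (U3 v)) :
    Continuous (g3 h w v) := by
  have h1 := cont_div2 hw
  have h2 := cont_fv hv
  have h3 := cont_dfv hv ((0:ℝ), (0:ℝ), (1:ℝ))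
  have h4 := cont_WZ (h := h) hw
  unfold g3
  fun_prop

lemma fv_deriv1 (hv : ContDiff ℝ 1 (U3 v)) (x y z : ℝ) :
    HasDerivAt (fun x' => fv v (x', y, z)) (dfv v (1, 0, 0) (x, y, z)) x := by
  have hd := pd1_hasDerivAt (hv.differentiable one_ne_zero) x y z
  have h1 := hd.fst'
  have h2 := hd.snd'
  have heq : (fun x' => fv v (x', y, z)) = fun x' =>
      ((U3 v (x', y, z)).1 * (U3 v (x', y, z)).1 + (U3 v (x', y, z)).2 * (U3 v (x', y, z)).2) / 2 := by
    funext t; unfold fv; ring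
  rw [heq]
  refine (((h1.mul h1).add (h2.mul h2)).div_const 2).congr_deriv ?_
  unfold dfv
  ring

lemma fv_deriv2 (hv : ContDiff ℝ 1 (U3 v)) (x y z : ℝ) :
    HasDerivAt (fun y' => fv v (x, y', z)) (dfv v (0, 1, 0) (x, y, z)) y := by
  have hd := pd2_hasDerivAt (hv.differentiable one_ne_zero) x y z
  have h1 := hd.fst'
  have h2 := hd.snd'
  have heq : (fun y' => fv v (x, y', z)) = fun y' =>
      ((U3 v (x, y', z)).1 * (U3 v (x, y', z)).1 + (U3 v (x, y', z)).2 * (U3 v (x, y', z)).2) / 2 := by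
    funext t; unfold fv; ring
  rw [heq]
  refine (((h1.mul h1).add (h2.mul h2)).div_const 2).congr_deriv ?_
  unfold dfv
  ring

lemma fv_deriv3 (hv : ContDiff ℝ 1 (U3 v)) (x y z : ℝ) :
    HasDerivAt (fun z' => fv v (x, y, z')) (dfv v (0, 0, 1) (x, y, z)) z := by
  have hd := pd3_hasDerivAt (hv.differentiable one_ne_zero) x y z
  have h1 := hd.fst'
  have h2 := hd.snd'
  have heq : (fun z' => fv v (x, y, z')) = fun z' =>
      ((U3 v (x, y, z')).1 * (U3 v (x, y, z')).1 + (U3 v (x, y, z')).2 * (U3 v (x, y, z')).2) / 2 := by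
    funext t; unfold fv; ring
  rw [heq]
  refine (((h1.mul h1).add (h2.mul h2)).div_const 2).congr_deriv ?_
  unfold dfv
  ring

lemma F1 (hw : ContDiff ℝ 1 (U3 w)) (hv : ContDiff ℝ 1 (U3 v)) (x y z : ℝ) :
    HasDerivAt (fun x' => (U3 w (x', y, z)).1 * fv v (x', y, z)) (g1 w v (x, y, z)) x :=
  ((pd1_hasDerivAt (hw.differentiable one_ne_zero) x y z).fst').mul (fv_deriv1 hv x y z)

lemma F2 (hw : ContDiff ℝ 1 (U3 w)) (hv : ContDiff ℝ 1 (U3 v)) (x y z : ℝ) :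
    HasDerivAt (fun y' => (U3 w (x, y', z)).2 * fv v (x, y', z)) (g2 w v (x, y, z)) y :=
  ((pd2_hasDerivAt (hw.differentiable one_ne_zero) x y z).snd').mul (fv_deriv2 hv x y z)

lemma WZ_hasDerivAt (hw : ContDiff ℝ 1 (U3 w)) (x y z : ℝ) :
    HasDerivAt (fun z' => ∫ ξ in (-h)..z', div2 w x y ξ) (div2 w x y z) z := by
  have hc : Continuous fun ξ => div2 w x y ξ := by
    have := cont_div2 hw
    have hm : Continuous fun t : ℝ => ((x : ℝ), y, t) := by fun_prop
    exact this.comp hm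
  exact intervalIntegral.integral_hasDerivAt_right (hc.intervalIntegrable _ _)
    (hc.stronglyMeasurable.stronglyMeasurableAtFilter) hc.continuousAt

lemma F3 (hw : ContDiff ℝ 1 (U3 w)) (hv : ContDiff ℝ 1 (U3 v)) (x y z : ℝ) :
    HasDerivAt (fun z' => (∫ ξ in (-h)..z', div2 w x y ξ) * fv v (x, y, z'))
      (g3 h w v (x, y, z)) z :=
  (WZ_hasDerivAt hw x y z).mul (fv_deriv3 hv x y z)

lemma Wtop (hw : ContDiff ℝ 1 (U3 w))
    (hwdiv : ∀ x y, deriv (fun x' => (∫ z in (-h)..(0:ℝ), w x' y z).1) x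
        + deriv (fun y' => (∫ z in (-h)..(0:ℝ), w x y' z).2) y = 0)
    (x y : ℝ) : (∫ ξ in (-h)..(0:ℝ), div2 w x y ξ) = 0 := by
  have hd1 : Continuous fun z : ℝ => fderiv ℝ (U3 w) (x, y, z) ((1:ℝ), (0:ℝ), (0:ℝ)) :=
    (cont_pd hw le_rfl _).comp (by fun_prop)
  have hd2 : Continuous fun z : ℝ => fderiv ℝ (U3 w) (x, y, z) ((0:ℝ), (1:ℝ), (0:ℝ)) :=
    (cont_pd hw le_rfl _).comp (by fun_prop)
  have hx : deriv (fun x' => (∫ z in (-h)..(0:ℝ), w x' y z).1) x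
      = (∫ z in (-h)..(0:ℝ), fderiv ℝ (U3 w) (x, y, z) ((1:ℝ), (0:ℝ), (0:ℝ))).1 :=
    (hasDerivAt_param1 hw (-h) 0 y x).fst'.deriv
  have hy : deriv (fun y' => (∫ z in (-h)..(0:ℝ), w x y' z).2) y
      = (∫ z in (-h)..(0:ℝ), fderiv ℝ (U3 w) (x, y, z) ((0:ℝ), (1:ℝ), (0:ℝ))).2 :=
    (hasDerivAt_param2 hw (-h) 0 x y).snd'.deriv
  have hc1 : (∫ z in (-h)..(0:ℝ), fderiv ℝ (U3 w) (x, y, z) ((1:ℝ), (0:ℝ), (0:ℝ))).1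
      = ∫ z in (-h)..(0:ℝ), (fderiv ℝ (U3 w) (x, y, z) ((1:ℝ), (0:ℝ), (0:ℝ))).1 :=
    ((ContinuousLinearMap.fst ℝ ℝ ℝ).intervalIntegral_comp_comm
      (hd1.intervalIntegrable _ _)).symm
  have hc2 : (∫ z in (-h)..(0:ℝ), fderiv ℝ (U3 w) (x, y, z) ((0:ℝ), (1:ℝ), (0:ℝ))).2
      = ∫ z in (-h)..(0:ℝ), (fderiv ℝ (U3 w) (x, y, z) ((0:ℝ), (1:ℝ), (0:ℝ))).2 :=
    ((ContinuousLinearMap.snd ℝ ℝ ℝ).intervalIntegral_comp_comm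
      (hd2.intervalIntegrable _ _)).symm
  have hsum := hwdiv x y
  rw [hx, hy, hc1, hc2] at hsum
  calc (∫ ξ in (-h)..(0:ℝ), div2 w x y ξ)
      = ∫ ξ in (-h)..(0:ℝ), ((fderiv ℝ (U3 w) (x, y, ξ) ((1:ℝ), (0:ℝ), (0:ℝ))).1
          + (fderiv ℝ (U3 w) (x, y, ξ) ((0:ℝ), (1:ℝ), (0:ℝ))).2) := by
        apply intervalIntegral.integral_congr
        intro t _
        exact div2_eq hw x y t
    _ = (∫ z in (-h)..(0:ℝ), (fderiv ℝ (U3 w) (x, y, z) ((1:ℝ), (0:ℝ), (0:ℝ))).1)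
          + ∫ z in (-h)..(0:ℝ), (fderiv ℝ (U3 w) (x, y, z) ((0:ℝ), (1:ℝ), (0:ℝ))).2 :=
        intervalIntegral.integral_add (hd1.fst.intervalIntegrable _ _)
          (hd2.snd.intervalIntegrable _ _)
    _ = 0 := hsum

lemma integrand_eq (hw : ContDiff ℝ 1 (U3 w)) (hv : ContDiff ℝ 1 (U3 v)) (x y z : ℝ) :
    (bPE h w v x y z).1 * (v x y z).1 + (bPE h w v x y z).2 * (v x y z).2
      = g1 w v (x, y, z) + g2 w v (x, y, z) - g3 h w v (x, y, z) := by
  have hDx : deriv (fun x' => v x' y z) x = fderiv ℝ (U3 v) (x, y, z) ((1:ℝ), (0:ℝ), (0:ℝ)) :=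
    (pd1_hasDerivAt (hv.differentiable one_ne_zero) x y z).deriv
  have hDy : deriv (fun y' => v x y' z) y = fderiv ℝ (U3 v) (x, y, z) ((0:ℝ), (1:ℝ), (0:ℝ)) :=
    (pd2_hasDerivAt (hv.differentiable one_ne_zero) x y z).deriv
  have hDz : deriv (fun z' => v x y z') z = fderiv ℝ (U3 v) (x, y, z) ((0:ℝ), (0:ℝ), (1:ℝ)) :=
    (pd3_hasDerivAt (hv.differentiable one_ne_zero) x y z).deriv
  unfold bPE
  rw [hDx, hDy, hDz]
  unfold g1 g2 g3 fv dfv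
  rw [div2_eq hw x y z]
  simp only [U3, Prod.fst_add, Prod.snd_add, Prod.fst_sub, Prod.snd_sub, Prod.smul_fst,
    Prod.smul_snd, smul_eq_mul]
  ring

end PEproof



/-- for `w ∈ V` and `v ∈ H²(O)²`, `⟨b(w,v), v⟩_{L²} = 0`. -/
theorem inner_bPE_self_eq_zero
    (L h : ℝ) (hL : 0 < L) (hh : 0 < h)
    (w v : ℝ → ℝ → ℝ → ℝ × ℝ)
    (hw : ContDiff ℝ 1 (fun ζ : ℝ × ℝ × ℝ => w ζ.1 ζ.2.1 ζ.2.2))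
    (hv : ContDiff ℝ 2 (fun ζ : ℝ × ℝ × ℝ => v ζ.1 ζ.2.1 ζ.2.2))
    (hwperx : ∀ x y z, w (x + L) y z = w x y z)
    (hwpery : ∀ x y z, w x (y + L) z = w x y z)
    (hwperz : ∀ x y z, w x y (z + h) = w x y z)
    (hweven : ∀ x y z, w x y (-z) = w x y z)
    (hwmean : (∫ x in (0:ℝ)..L, ∫ y in (0:ℝ)..L, ∫ z in (-h)..(0:ℝ), w x y z) = 0)
    (hwdiv : ∀ x y,
      deriv (fun x' => (∫ z in (-h)..(0:ℝ), w x' y z).1) x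
        + deriv (fun y' => (∫ z in (-h)..(0:ℝ), w x y' z).2) y = 0)
    (hvperx : ∀ x y z, v (x + L) y z = v x y z)
    (hvpery : ∀ x y z, v x (y + L) z = v x y z)
    (hvperz : ∀ x y z, v x y (z + h) = v x y z) :
    (∫ x in (0:ℝ)..L, ∫ y in (0:ℝ)..L, ∫ z in (-h)..(0:ℝ),
        ((bPE h w v x y z).1 * (v x y z).1 + (bPE h w v x y z).2 * (v x y z).2)) = 0 := by
  have hw' : ContDiff ℝ 1 (PEproof.U3 w) := hw
  have hv' : ContDiff ℝ 1 (PEproof.U3 v) := hv.of_le (by norm_num)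
  have hLL : (0:ℝ) ≤ L := hL.le
  have hhL : (-h:ℝ) ≤ 0 := by linarith
  have hcg1 := PEproof.cont_g1 hw' hv'
  have hcg2 := PEproof.cont_g2 hw' hv'
  have hcg3 := PEproof.cont_g3 (h := h) hw' hv'
  -- pointwise identity
  have hpt : ∀ x y z, (bPE h w v x y z).1 * (v x y z).1 + (bPE h w v x y z).2 * (v x y z).2
      = PEproof.g1 w v (x, y, z) + PEproof.g2 w v (x, y, z) - PEproof.g3 h w v (x, y, z) :=
    fun x y z => PEproof.integrand_eq hw' hv' x y z
  simp_rw [hpt]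
  -- innermost split and vanishing of the g3 part
  have hz3 : ∀ x y, (∫ z in (-h)..(0:ℝ), PEproof.g3 h w v (x, y, z)) = 0 := by
    intro x y
    have hFTC := intervalIntegral.integral_eq_sub_of_hasDerivAt
      (f := fun z' => (∫ ξ in (-h)..z', div2 w x y ξ) * PEproof.fv v (x, y, z'))
      (f' := fun z => PEproof.g3 h w v (x, y, z)) (a := -h) (b := 0)
      (fun t _ => PEproof.F3 hw' hv' x y t)
      ((hcg3.comp (by fun_prop : Continuous fun z : ℝ => ((x:ℝ), y, z))).intervalIntegrable _ _)
    rw [hFTC]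
    beta_reduce
    rw [PEproof.Wtop hw' hwdiv x y, intervalIntegral.integral_same]
    ring
  have hsplit : ∀ x y, (∫ z in (-h)..(0:ℝ),
        (PEproof.g1 w v (x, y, z) + PEproof.g2 w v (x, y, z) - PEproof.g3 h w v (x, y, z)))
      = (∫ z in (-h)..(0:ℝ), PEproof.g1 w v (x, y, z))
        + (∫ z in (-h)..(0:ℝ), PEproof.g2 w v (x, y, z)) := by
    intro x y
    have i1 := (hcg1.comp (by fun_prop : Continuous fun z : ℝ =>
      ((x:ℝ), y, z))).intervalIntegrable (μ := volume) (-h) 0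
    have i2 := (hcg2.comp (by fun_prop : Continuous fun z : ℝ =>
      ((x:ℝ), y, z))).intervalIntegrable (μ := volume) (-h) 0
    have i3 := (hcg3.comp (by fun_prop : Continuous fun z : ℝ =>
      ((x:ℝ), y, z))).intervalIntegrable (μ := volume) (-h) 0
    simp only [Function.comp_def] at i1 i2 i3
    rw [intervalIntegral.integral_sub (i1.add i2) i3, intervalIntegral.integral_add i1 i2,
      hz3 x y, sub_zero]
  simp_rw [hsplit]
  -- the g2 part vanishes after swapping y and z
  have hy2 : ∀ x z, (∫ y in (0:ℝ)..L, PEproof.g2 w v (x, y, z)) = 0 := by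
    intro x z
    have hFTC := intervalIntegral.integral_eq_sub_of_hasDerivAt
      (f := fun y' => (PEproof.U3 w (x, y', z)).2 * PEproof.fv v (x, y', z))
      (f' := fun y => PEproof.g2 w v (x, y, z)) (a := 0) (b := L)
      (fun t _ => PEproof.F2 hw' hv' x t z)
      ((hcg2.comp (by fun_prop : Continuous fun y : ℝ => ((x:ℝ), y, z))).intervalIntegrable _ _)
    rw [hFTC]
    beta_reduce
    have e1 : PEproof.U3 w (x, L, z) = PEproof.U3 w (x, 0, z) := by
      have := hwpery x 0 z; simpa [PEproof.U3] using this
    have e2 : PEproof.fv v (x, L, z) = PEproof.fv v (x, 0, z) := by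
      have hveq : v x L z = v x 0 z := by have := hvpery x 0 z; simpa using this
      unfold PEproof.fv PEproof.U3
      simp only
      rw [hveq]
    rw [e1, e2, sub_self]
  have hx1 : ∀ y z, (∫ x in (0:ℝ)..L, PEproof.g1 w v (x, y, z)) = 0 := by
    intro y z
    have hFTC := intervalIntegral.integral_eq_sub_of_hasDerivAt
      (f := fun x' => (PEproof.U3 w (x', y, z)).1 * PEproof.fv v (x', y, z))
      (f' := fun x => PEproof.g1 w v (x, y, z)) (a := 0) (b := L)
      (fun t _ => PEproof.F1 hw' hv' t y z)
      ((hcg1.comp (by fun_prop : Continuous fun x : ℝ => ((x:ℝ), y, z))).intervalIntegrable _ _)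
    rw [hFTC]
    beta_reduce
    have e1 : PEproof.U3 w (L, y, z) = PEproof.U3 w (0, y, z) := by
      have := hwperx 0 y z; simpa [PEproof.U3] using this
    have e2 : PEproof.fv v (L, y, z) = PEproof.fv v (0, y, z) := by
      have hveq : v L y z = v 0 y z := by have := hvperx 0 y z; simpa using this
      unfold PEproof.fv PEproof.U3
      simp only
      rw [hveq]
    rw [e1, e2, sub_self]
  -- remove the g2 term
  have hZ1 : Continuous fun q : ℝ × ℝ => ∫ z in (-h)..(0:ℝ), PEproof.g1 w v (q.1, q.2, z) :=
    intervalIntegral.continuous_parametric_intervalIntegral_of_continuous'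
      (f := fun (q : ℝ × ℝ) (t : ℝ) => PEproof.g1 w v (q.1, q.2, t))
      (hcg1.comp (by fun_prop)) (-h) 0
  have hZ2 : Continuous fun q : ℝ × ℝ => ∫ z in (-h)..(0:ℝ), PEproof.g2 w v (q.1, q.2, z) :=
    intervalIntegral.continuous_parametric_intervalIntegral_of_continuous'
      (f := fun (q : ℝ × ℝ) (t : ℝ) => PEproof.g2 w v (q.1, q.2, t))
      (hcg2.comp (by fun_prop)) (-h) 0
  have hmid : ∀ x, (∫ y in (0:ℝ)..L,
        ((∫ z in (-h)..(0:ℝ), PEproof.g1 w v (x, y, z))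
          + ∫ z in (-h)..(0:ℝ), PEproof.g2 w v (x, y, z)))
      = ∫ y in (0:ℝ)..L, ∫ z in (-h)..(0:ℝ), PEproof.g1 w v (x, y, z) := by
    intro x
    have j1 := (hZ1.comp (by fun_prop : Continuous fun y : ℝ =>
      (((x:ℝ), y) : ℝ × ℝ))).intervalIntegrable (μ := volume) (0:ℝ) L
    have j2 := (hZ2.comp (by fun_prop : Continuous fun y : ℝ =>
      (((x:ℝ), y) : ℝ × ℝ))).intervalIntegrable (μ := volume) (0:ℝ) L
    simp only [Function.comp_def] at j1 j2
    rw [intervalIntegral.integral_add j1 j2]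
    have hswap : (∫ y in (0:ℝ)..L, ∫ z in (-h)..(0:ℝ), PEproof.g2 w v (x, y, z))
        = ∫ z in (-h)..(0:ℝ), ∫ y in (0:ℝ)..L, PEproof.g2 w v (x, y, z) :=
      interval_integral_swap (g := fun y z => PEproof.g2 w v (x, y, z))
        (hcg2.comp (by fun_prop)) hLL hhL
    rw [hswap, intervalIntegral.integral_congr (g := fun _ => (0:ℝ)) fun z _ => hy2 x z]
    simp
  simp_rw [hmid]
  -- swap x and y, then x and z, and conclude
  rw [interval_integral_swap (g := fun x y => ∫ z in (-h)..(0:ℝ), PEproof.g1 w v (x, y, z))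
    hZ1 hLL hLL]
  have hlast : ∀ y, (∫ x in (0:ℝ)..L, ∫ z in (-h)..(0:ℝ), PEproof.g1 w v (x, y, z)) = 0 := by
    intro y
    rw [interval_integral_swap (g := fun x z => PEproof.g1 w v (x, y, z))
      (hcg1.comp (by fun_prop)) hLL hhL,
      intervalIntegral.integral_congr (g := fun _ => (0:ℝ)) fun z _ => hx1 y z]
    simp
  rw [intervalIntegral.integral_congr (g := fun _ => (0:ℝ)) fun y _ => hlast y]
  simp
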